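/- arXiv:2402.04651 — 5 statements merged into one kernel-verified Lean document; each statement's English description precedes it below -/
import Mathlib

section
/- For λ > 1 and α ∈ (0, 2π) with α ≠ π, there is no solution γ of the equation |sin(γ(α − π))| = λ|sin(γπ)| with 0 < γ ≤ 1/2. -/
open Real

theorem stmt_1 (lam α : ℝ) (hlam : 1 < lam) (hα0 : 0 < α) (hα2 : α < 2 * π)
    (hαπ : α ≠ π) :
    ¬ ∃ γ : ℝ, 0 < γ ∧ γ ≤ 1 / 2 ∧
      |Real.sin (γ * (α - π))| = lam * |Real.sin (γ * π)| := by
  rintro ⟨γ, hγ0, hγ12, heq⟩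
  have hπ := Real.pi_pos
  have hγπ : γ * π ≤ π / 2 := by nlinarith
  have hγπ0 : 0 < γ * π := by positivity
  have hsin : 0 < Real.sin (γ * π) :=
    Real.sin_pos_of_pos_of_lt_pi hγπ0 (by linarith)
  have habs : |γ * (α - π)| ≤ γ * π := by
    rw [abs_mul, abs_of_pos hγ0]
    have : |α - π| ≤ π := by
      rw [abs_le]; constructor <;> nlinarith
    nlinarith
  obtain ⟨hl, hr⟩ := abs_le.mp habs
  have hx : |γ * (α - π)| ≤ π / 2 := le_trans habs hγπ
  have hx' := abs_le.mp hx
  have mem1 : γ * (α - π) ∈ Set.Icc (-(π/2)) (π/2) := ⟨hx'.1, hx'.2⟩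
  have mem2 : γ * π ∈ Set.Icc (-(π/2)) (π/2) := ⟨by linarith, hγπ⟩
  have mem3 : -(γ * π) ∈ Set.Icc (-(π/2)) (π/2) := ⟨by linarith, by linarith⟩
  have h1 : |Real.sin (γ * (α - π))| ≤ Real.sin (γ * π) := by
    rw [abs_le]
    constructor
    · have := Real.strictMonoOn_sin.monotoneOn mem3 mem1 hl
      rwa [Real.sin_neg] at this
    · exact Real.strictMonoOn_sin.monotoneOn mem1 mem2 hr
  rw [abs_of_pos hsin] at heq
  nlinarith
end

section
/- Let λ > 1 and π < α < 2π. If γ₁ ∈ (1/2, 1) satisfies sin(γ₁(α − π)) = λ sin(γ₁π) and γ₂ ∈ (1, 3/2) satisfies sin(γ₂(α − π)) = −λ sin(γ₂π), then sin(γ₁α)·sin((γ₁−1)α) > 0 and sin(γ₂α)·sin((γ₂−1)α) < 0; in particular sin(γ₁α)sin((γ₁−1)α) ≠ sin(γ₂α)sin((γ₂−1)α). -/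
open Real
set_option maxHeartbeats 1000000

lemma sin_neg_of_pi_lt (x : ℝ) (h1 : π < x) (h2 : x < 2 * π) : Real.sin x < 0 := by
  have h := Real.sin_pos_of_pos_of_lt_pi (x := x - π) (by linarith) (by linarith)
  rw [Real.sin_sub_pi] at h
  linarith

theorem stmt_5 (lam α γ₁ γ₂ : ℝ) (hlam : 1 < lam) (hα0 : π < α) (hα2 : α < 2 * π)
    (hγ11 : 1 / 2 < γ₁) (hγ12 : γ₁ < 1)
    (hγ21 : 1 < γ₂) (hγ22 : γ₂ < 3 / 2)
    (heq1 : Real.sin (γ₁ * (α - π)) = lam * Real.sin (γ₁ * π))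
    (heq2 : Real.sin (γ₂ * (α - π)) = -(lam * Real.sin (γ₂ * π))) :
    0 < Real.sin (γ₁ * α) * Real.sin ((γ₁ - 1) * α) ∧
    Real.sin (γ₂ * α) * Real.sin ((γ₂ - 1) * α) < 0 ∧
    Real.sin (γ₁ * α) * Real.sin ((γ₁ - 1) * α) ≠
      Real.sin (γ₂ * α) * Real.sin ((γ₂ - 1) * α) := by
  have hπ : (0:ℝ) < π := Real.pi_pos
  -- Part 1
  have hs1pos : 0 < Real.sin (γ₁ * π) :=
    Real.sin_pos_of_pos_of_lt_pi (by nlinarith) (by nlinarith)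
  have hgt1 : Real.sin (γ₁ * π) < Real.sin (γ₁ * (α - π)) := by
    rw [heq1]; nlinarith
  -- lower bound:  (1-γ₁)π < γ₁(α-π)
  have hlb1 : (1 - γ₁) * π < γ₁ * (α - π) := by
    by_contra h
    push_neg at h
    have hmem1 : γ₁ * (α - π) ∈ Set.Icc (-(π/2)) (π/2) := by
      constructor <;> nlinarith
    have hmem2 : (1 - γ₁) * π ∈ Set.Icc (-(π/2)) (π/2) := by
      constructor <;> nlinarith
    have := Real.strictMonoOn_sin.monotoneOn hmem1 hmem2 h
    rw [show (1 - γ₁) * π = π - γ₁ * π by ring, Real.sin_pi_sub] at this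
    linarith
  have hA1 : π < γ₁ * α := by nlinarith
  have hA2 : γ₁ * α < 2 * π := by nlinarith
  have hsinA : Real.sin (γ₁ * α) < 0 := sin_neg_of_pi_lt _ hA1 hA2
  have hsinB : Real.sin ((γ₁ - 1) * α) < 0 := by
    have h1 : 0 < (1 - γ₁) * α := by nlinarith
    have h2 : (1 - γ₁) * α < π := by nlinarith
    have := Real.sin_pos_of_pos_of_lt_pi h1 h2
    rw [show (γ₁ - 1) * α = -((1 - γ₁) * α) by ring, Real.sin_neg]
    linarith
  have P1 : 0 < Real.sin (γ₁ * α) * Real.sin ((γ₁ - 1) * α) :=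
    mul_pos_of_neg_of_neg hsinA hsinB
  -- Part 2
  have hs2neg : Real.sin (γ₂ * π) < 0 := by
    apply sin_neg_of_pi_lt <;> nlinarith
  have hgt2 : -Real.sin (γ₂ * π) < Real.sin (γ₂ * (α - π)) := by
    rw [heq2]; nlinarith
  -- upper bound:  γ₂(α-π) < (2-γ₂)π
  have hub2 : γ₂ * (α - π) < (2 - γ₂) * π := by
    by_contra h
    push_neg at h
    have hmem1 : π - γ₂ * (α - π) ∈ Set.Icc (-(π/2)) (π/2) := by
      constructor <;> nlinarith
    have hmem2 : (γ₂ - 1) * π ∈ Set.Icc (-(π/2)) (π/2) := by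
      constructor <;> nlinarith
    have hle : π - γ₂ * (α - π) ≤ (γ₂ - 1) * π := by linarith
    have hmono := Real.strictMonoOn_sin.monotoneOn hmem1 hmem2 hle
    rw [Real.sin_pi_sub] at hmono
    rw [show (γ₂ - 1) * π = γ₂ * π - π by ring, Real.sin_sub_pi] at hmono
    linarith
  have hB1 : π < γ₂ * α := by nlinarith
  have hB2 : γ₂ * α < 2 * π := by nlinarith
  have hsinC : Real.sin (γ₂ * α) < 0 := sin_neg_of_pi_lt _ hB1 hB2
  have hsinD : 0 < Real.sin ((γ₂ - 1) * α) := by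
    apply Real.sin_pos_of_pos_of_lt_pi <;> nlinarith
  have P2 : Real.sin (γ₂ * α) * Real.sin ((γ₂ - 1) * α) < 0 :=
    mul_neg_of_neg_of_pos hsinC hsinD
  exact ⟨P1, P2, by intro h; rw [h] at P1; linarith⟩
end

section
/- Let n ≥ 3 and let x, x' ∈ (ℝ²)ⁿ be vertex tuples of two polygons with d(x, x') = min_{j} max_{i} |x_{i+j} − x'_i|. For any point p on the boundary polyline of x, i.e. p = c·x_i + (1−c)·x_{i+1} with c ∈ [0,1], the distance from p to the boundary polyline of x' is at most d(x, x'). Consequently the Hausdorff distance between the two closed polygonal boundaries is at most d(x, x'). -/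
open Finset
set_option maxHeartbeats 1000000

noncomputable def cyclicDist (n : ℕ) (hn : 3 ≤ n)
    (x x' : Fin n → EuclideanSpace ℝ (Fin 2)) : ℝ :=
  Finset.univ.inf' ⟨(⟨0, by omega⟩ : Fin n), Finset.mem_univ _⟩
    (fun j => Finset.univ.sup' ⟨(⟨0, by omega⟩ : Fin n), Finset.mem_univ _⟩
      (fun i => dist (x (i + j)) (x' i)))

def polyline (n : ℕ) (hn : 3 ≤ n) (x : Fin n → EuclideanSpace ℝ (Fin 2)) :
    Set (EuclideanSpace ℝ (Fin 2)) :=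
  ⋃ i : Fin n, segment ℝ (x i) (x (i + ⟨1, by omega⟩))

lemma cyclicDist_nonneg (n : ℕ) (hn : 3 ≤ n)
    (x x' : Fin n → EuclideanSpace ℝ (Fin 2)) : 0 ≤ cyclicDist n hn x x' := by
  apply Finset.le_inf'
  intro j _
  exact le_trans dist_nonneg
    (Finset.le_sup' (fun i => dist (x (i + j)) (x' i)) (Finset.mem_univ (⟨0, by omega⟩ : Fin n)))

lemma cyclicDist_symm (n : ℕ) (hn : 3 ≤ n)
    (x x' : Fin n → EuclideanSpace ℝ (Fin 2)) :
    cyclicDist n hn x x' = cyclicDist n hn x' x := by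
  haveI : NeZero n := ⟨by omega⟩
  have key : ∀ (y y' : Fin n → EuclideanSpace ℝ (Fin 2)),
      cyclicDist n hn y' y ≤ cyclicDist n hn y y' := by
    intro y y'
    obtain ⟨j₀, _, hj₀⟩ := Finset.exists_mem_eq_inf'
      (⟨(⟨0, by omega⟩ : Fin n), Finset.mem_univ _⟩)
      (fun j => Finset.univ.sup' ⟨(⟨0, by omega⟩ : Fin n), Finset.mem_univ _⟩
        (fun i => dist (y (i + j)) (y' i)))
    have hj₀' : cyclicDist n hn y y' = Finset.univ.sup' ⟨(⟨0, by omega⟩ : Fin n), Finset.mem_univ _⟩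
        (fun i => dist (y (i + j₀)) (y' i)) := hj₀
    refine le_of_le_of_eq ?_ hj₀'.symm
    refine le_trans (Finset.inf'_le (fun j => Finset.univ.sup' ⟨(⟨0, by omega⟩ : Fin n), Finset.mem_univ _⟩
      (fun i => dist (y' (i + j)) (y i))) (Finset.mem_univ (-j₀))) ?_
    apply Finset.sup'_le
    intro i _
    have : dist (y' (i + -j₀)) (y i) = dist (y ((i + -j₀) + j₀)) (y' (i + -j₀)) := by
      rw [neg_add_cancel_right, dist_comm]
    rw [this]
    exact Finset.le_sup' (fun i => dist (y (i + j₀)) (y' i)) (Finset.mem_univ (i + -j₀))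
  exact le_antisymm (key x' x) (key x x')

lemma infDist_le_key (n : ℕ) (hn : 3 ≤ n)
    (x x' : Fin n → EuclideanSpace ℝ (Fin 2)) :
    ∀ p ∈ polyline n hn x, Metric.infDist p (polyline n hn x') ≤ cyclicDist n hn x x' := by
  haveI : NeZero n := ⟨by omega⟩
  intro p hp
  obtain ⟨j₀, _, hj₀⟩ := Finset.exists_mem_eq_inf'
    (⟨(⟨0, by omega⟩ : Fin n), Finset.mem_univ _⟩)
    (fun j => Finset.univ.sup' ⟨(⟨0, by omega⟩ : Fin n), Finset.mem_univ _⟩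
      (fun i => dist (x (i + j)) (x' i)))
  set M := Finset.univ.sup' ⟨(⟨0, by omega⟩ : Fin n), Finset.mem_univ _⟩
      (fun i => dist (x (i + j₀)) (x' i)) with hMdef
  have hcd : cyclicDist n hn x x' = M := hj₀
  rw [polyline, Set.mem_iUnion] at hp
  obtain ⟨i, hpi⟩ := hp
  obtain ⟨a, b, ha, hb, hab, rfl⟩ := hpi
  set k : Fin n := i - j₀ with hk
  have hq : a • x' k + b • x' (k + ⟨1, by omega⟩) ∈ polyline n hn x' :=
    Set.mem_iUnion.2 ⟨k, ⟨a, b, ha, hb, hab, rfl⟩⟩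
  refine le_trans (Metric.infDist_le_dist_of_mem hq) ?_
  rw [hcd]
  have h1 : x i = x (k + j₀) := by rw [hk, sub_add_cancel]
  have h2 : x (i + ⟨1, by omega⟩) = x ((k + ⟨1, by omega⟩) + j₀) := by
    rw [hk, add_right_comm, sub_add_cancel]
  have gen : ∀ m : Fin n, dist (x (m + j₀)) (x' m) ≤ M := fun m =>
    Finset.le_sup' (fun i => dist (x (i + j₀)) (x' i)) (Finset.mem_univ m)
  have e1 : dist (x i) (x' k) ≤ M := by rw [h1]; exact gen _
  have e2 : dist (x (i + ⟨1, by omega⟩)) (x' (k + ⟨1, by omega⟩)) ≤ M := by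
    rw [h2]; exact gen _
  calc dist (a • x i + b • x (i + ⟨1, by omega⟩)) (a • x' k + b • x' (k + ⟨1, by omega⟩))
      ≤ dist (a • x i) (a • x' k)
        + dist (b • x (i + ⟨1, by omega⟩)) (b • x' (k + ⟨1, by omega⟩)) :=
        dist_add_add_le _ _ _ _
    _ = a * dist (x i) (x' k)
        + b * dist (x (i + ⟨1, by omega⟩)) (x' (k + ⟨1, by omega⟩)) := by
        rw [dist_smul₀, dist_smul₀, Real.norm_eq_abs, Real.norm_eq_abs,
          abs_of_nonneg ha, abs_of_nonneg hb]
    _ ≤ a * M + b * M :=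
        add_le_add (mul_le_mul_of_nonneg_left e1 ha) (mul_le_mul_of_nonneg_left e2 hb)
    _ = M := by rw [← add_mul, hab, one_mul]

theorem stmt_11 (n : ℕ) (hn : 3 ≤ n)
    (x x' : Fin n → EuclideanSpace ℝ (Fin 2)) :
    (∀ (i : Fin n) (c : ℝ), c ∈ Set.Icc (0 : ℝ) 1 →
      Metric.infDist (c • x i + (1 - c) • x (i + ⟨1, by omega⟩)) (polyline n hn x') ≤
        cyclicDist n hn x x') ∧
    Metric.hausdorffDist (polyline n hn x) (polyline n hn x') ≤ cyclicDist n hn x x' := by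
  constructor
  · intro i c hc
    apply infDist_le_key n hn x x'
    exact Set.mem_iUnion.2 ⟨i, ⟨c, 1 - c, hc.1, by linarith [hc.2], by ring, rfl⟩⟩
  · refine Metric.hausdorffDist_le_of_infDist (cyclicDist_nonneg n hn x x')
      (infDist_le_key n hn x x') ?_
    intro p hp
    rw [cyclicDist_symm]
    exact infDist_le_key n hn x' x p hp
end

section
/- Let F : U → Y be differentiable on an open set U ⊆ ℝ^N with ‖F(x+d) − F(x') − F'(x')d‖ ≤ C‖d‖² for all x' in a neighborhood of x ∈ U and all sufficiently small d, and ‖F(y) − F(z)‖ ≤ L‖y − z‖ locally near x. Then for all x' near x and all unit vectors d, ‖F'(x')d − F'(x)d‖ ≤ (2C + 2L)·‖x' − x‖^{1/2}; in particular F' is continuous at x (so F is C¹ near x). -/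
open Real

theorem stmt_18 (N : ℕ) {Y : Type*} [NormedAddCommGroup Y] [NormedSpace ℝ Y]
    [CompleteSpace Y]
    (U : Set (EuclideanSpace ℝ (Fin N))) (hU : IsOpen U)
    (F : EuclideanSpace ℝ (Fin N) → Y)
    (F' : EuclideanSpace ℝ (Fin N) → (EuclideanSpace ℝ (Fin N) →L[ℝ] Y))
    (hdiff : ∀ z ∈ U, HasFDerivAt F (F' z) z)
    (x : EuclideanSpace ℝ (Fin N)) (hx : x ∈ U)
    (C L ρ : ℝ) (hC : 0 < C) (hL : 0 < L) (hρ : 0 < ρ)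
    (V : Set (EuclideanSpace ℝ (Fin N))) (hV : V ∈ nhds x) (hVU : V ⊆ U)
    (hTaylor : ∀ x' ∈ V, ∀ d : EuclideanSpace ℝ (Fin N), ‖d‖ ≤ ρ →
      ‖F (x' + d) - F x' - F' x' d‖ ≤ C * ‖d‖ ^ 2)
    (hLip : ∀ y ∈ V, ∀ z ∈ V, ‖F y - F z‖ ≤ L * ‖y - z‖) :
    (∃ δ : ℝ, 0 < δ ∧ ∀ x' : EuclideanSpace ℝ (Fin N), ‖x' - x‖ < δ →
      ∀ d : EuclideanSpace ℝ (Fin N), ‖d‖ = 1 →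
        ‖F' x' d - F' x d‖ ≤ (2 * C + 2 * L) * Real.sqrt ‖x' - x‖) ∧
    ContinuousAt F' x := by
  obtain ⟨r, hr, hball⟩ := Metric.mem_nhds_iff.mp hV
  have hxV : x ∈ V := mem_of_mem_nhds hV
  set δ : ℝ := min (min 1 (ρ ^ 2)) ((r / 2) ^ 2) with hδdef
  have hδ : 0 < δ := by positivity
  have hd : ∀ x' : EuclideanSpace ℝ (Fin N), ‖x' - x‖ < δ →
      ∀ d : EuclideanSpace ℝ (Fin N), ‖d‖ = 1 →
        ‖F' x' d - F' x d‖ ≤ (2 * C + 2 * L) * Real.sqrt ‖x' - x‖ := by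
    intro x' hx' d hd1
    rcases eq_or_ne x' x with rfl | hne
    · simp
    set s := ‖x' - x‖ with hs
    have hs0 : 0 < s := by rw [hs, norm_pos_iff, sub_ne_zero]; exact hne
    set t := Real.sqrt s with ht
    have ht0 : 0 < t := Real.sqrt_pos.mpr hs0
    have hts : t * t = s := Real.mul_self_sqrt hs0.le
    have hs1 : s < 1 := lt_of_lt_of_le hx' (le_trans (min_le_left _ _) (min_le_left _ _))
    have ht1 : t < 1 := by
      have := Real.sqrt_lt_sqrt hs0.le hs1
      rwa [Real.sqrt_one] at this
    have htρ : t ≤ ρ := by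
      have hsρ : s < ρ ^ 2 := lt_of_lt_of_le hx' (le_trans (min_le_left _ _) (min_le_right _ _))
      have h := Real.sqrt_lt_sqrt hs0.le hsρ
      rw [Real.sqrt_sq hρ.le] at h
      rw [ht]; exact h.le
    have htr : t < r / 2 := by
      have hsr : s < (r / 2) ^ 2 := lt_of_lt_of_le hx' (min_le_right _ _)
      have := Real.sqrt_lt_sqrt hs0.le hsr
      rwa [Real.sqrt_sq (by positivity)] at this
    have hnd : ‖t • d‖ = t := by
      rw [norm_smul, hd1, mul_one, Real.norm_eq_abs, abs_of_pos ht0]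
    have hx'V : x' ∈ V := by
      apply hball
      rw [Metric.mem_ball, dist_eq_norm, ← hs]
      nlinarith
    have hxhV : x + t • d ∈ V := by
      apply hball
      rw [Metric.mem_ball, dist_eq_norm, add_sub_cancel_left, hnd]
      linarith
    have hx'hV : x' + t • d ∈ V := by
      apply hball
      rw [Metric.mem_ball, dist_eq_norm]
      calc ‖x' + t • d - x‖ = ‖(x' - x) + t • d‖ := by abel_nf
        _ ≤ ‖x' - x‖ + ‖t • d‖ := norm_add_le _ _
        _ = s + t := by rw [← hs, hnd]
        _ < r := by nlinarith
    have hA := hTaylor x' hx'V (t • d) (by rw [hnd]; exact htρ)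
    have hB := hTaylor x hxV (t • d) (by rw [hnd]; exact htρ)
    rw [hnd] at hA hB
    have hL1 := hLip (x' + t • d) hx'hV (x + t • d) hxhV
    have hL2 := hLip x' hx'V x hxV
    have hsub : (x' + t • d) - (x + t • d) = x' - x := by abel
    rw [hsub, ← hs] at hL1
    rw [← hs] at hL2
    have hid : F' x' (t • d) - F' x (t • d)
        = -(F (x' + t • d) - F x' - F' x' (t • d))
          + (F (x + t • d) - F x - F' x (t • d))
          + (F (x' + t • d) - F (x + t • d)) - (F x' - F x) := by abel
    have hkey : t * ‖F' x' d - F' x d‖ ≤ 2 * C * t ^ 2 + 2 * L * s := by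
      have h1 : t * ‖F' x' d - F' x d‖ = ‖F' x' (t • d) - F' x (t • d)‖ := by
        rw [map_smul, map_smul, ← smul_sub, norm_smul, Real.norm_eq_abs, abs_of_pos ht0]
      rw [h1, hid]
      calc ‖_ + _ + _ - _‖
          ≤ ‖-(F (x' + t • d) - F x' - F' x' (t • d))
              + (F (x + t • d) - F x - F' x (t • d))
              + (F (x' + t • d) - F (x + t • d))‖ + ‖F x' - F x‖ := norm_sub_le _ _
        _ ≤ (‖-(F (x' + t • d) - F x' - F' x' (t • d))
              + (F (x + t • d) - F x - F' x (t • d))‖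
              + ‖F (x' + t • d) - F (x + t • d)‖) + ‖F x' - F x‖ := by
            gcongr; exact norm_add_le _ _
        _ ≤ ((‖F (x' + t • d) - F x' - F' x' (t • d)‖
              + ‖F (x + t • d) - F x - F' x (t • d)‖)
              + ‖F (x' + t • d) - F (x + t • d)‖) + ‖F x' - F x‖ := by
            gcongr
            refine le_trans (norm_add_le _ _) ?_
            rw [norm_neg]
        _ ≤ ((C * t ^ 2 + C * t ^ 2) + L * s) + L * s := by gcongr
        _ = 2 * C * t ^ 2 + 2 * L * s := by ring
    have hsq : t ^ 2 = s := by rw [sq]; exact hts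
    have h2 : t * ‖F' x' d - F' x d‖ ≤ t * ((2 * C + 2 * L) * t) := by
      calc t * ‖F' x' d - F' x d‖ ≤ 2 * C * t ^ 2 + 2 * L * s := hkey
        _ = t * ((2 * C + 2 * L) * t) := by rw [← hsq]; ring
    exact le_of_mul_le_mul_left h2 ht0
  refine ⟨⟨δ, hδ, hd⟩, ?_⟩
  rw [Metric.continuousAt_iff]
  intro ε hε
  have hK : (0:ℝ) < 2 * C + 2 * L := by positivity
  refine ⟨min δ ((ε / (2 * (2 * C + 2 * L))) ^ 2), by positivity, fun x' hx' => ?_⟩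
  rw [dist_eq_norm] at hx' ⊢
  have h1 : ‖x' - x‖ < δ := lt_of_lt_of_le hx' (min_le_left _ _)
  have hop : ‖F' x' - F' x‖ ≤ (2 * C + 2 * L) * Real.sqrt ‖x' - x‖ := by
    apply ContinuousLinearMap.opNorm_le_of_unit_norm (by positivity)
    intro d hd1
    simpa using hd x' h1 d hd1
  have h2 : Real.sqrt ‖x' - x‖ < ε / (2 * (2 * C + 2 * L)) := by
    have h3 := lt_of_lt_of_le hx' (min_le_right _ _)
    have := Real.sqrt_lt_sqrt (norm_nonneg _) h3
    rwa [Real.sqrt_sq (by positivity)] at this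
  calc ‖F' x' - F' x‖ ≤ (2 * C + 2 * L) * Real.sqrt ‖x' - x‖ := hop
    _ < (2 * C + 2 * L) * (ε / (2 * (2 * C + 2 * L))) := by
        exact mul_lt_mul_of_pos_left h2 hK
    _ = ε / 2 := by field_simp
    _ < ε := by linarith
end

section
/- Let λ > 1, α ∈ (0, π). Then the equation sin(γ(π − α)) = λ·sin(γπ) has a solution γ₁ in the open interval (1/2, 1). -/
open Real

theorem stmt_19 (lam α : ℝ) (hlam : 1 < lam) (hα0 : 0 < α) (hαπ : α < π) :
    ∃ γ₁ : ℝ, 1 / 2 < γ₁ ∧ γ₁ < 1 ∧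
      Real.sin (γ₁ * (π - α)) = lam * Real.sin (γ₁ * π) := by
  set f : ℝ → ℝ := fun γ => Real.sin (γ * (π - α)) - lam * Real.sin (γ * π) with hf
  have hcont : ContinuousOn f (Set.Icc (1/2 : ℝ) 1) := by
    apply Continuous.continuousOn
    continuity
  have hfa : f (1/2) < 0 := by
    have h1 : Real.sin ((1/2 : ℝ) * π) = 1 := by
      rw [show (1/2 : ℝ) * π = π / 2 by ring, Real.sin_pi_div_two]
    have h2 : Real.sin ((1/2 : ℝ) * (π - α)) ≤ 1 := Real.sin_le_one _
    simp only [hf, h1, mul_one]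
    linarith
  have hfb : 0 < f 1 := by
    simp only [hf, one_mul, Real.sin_pi, mul_zero, sub_zero]
    exact Real.sin_pos_of_pos_of_lt_pi (by linarith) (by linarith)
  have := intermediate_value_Ioo (by norm_num : (1/2 : ℝ) ≤ 1) hcont
    (Set.mem_Ioo.mpr ⟨hfa, hfb⟩)
  obtain ⟨γ, hγmem, hγ⟩ := this
  exact ⟨γ, hγmem.1, hγmem.2, by simpa [hf, sub_eq_zero] using hγ⟩
end
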